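/- arXiv:2303.07998 — 6 statements merged into one kernel-verified Lean document; each statement's English description precedes it below -/
import Mathlib

section
/- (Generalized Malgrange inequality) Let 0 < α ≤ 1 and suppose f ∈ C^{1,α}(ℝⁿ) is nonnegative on ℝⁿ. Then for every x ∈ ℝⁿ, |∇f(x)| ≤ ((α+1)/α^{α/(1+α)}) · [∇f]_α^{1/(1+α)} · f(x)^{α/(1+α)}, where [∇f]_α is the α-Hölder seminorm of the gradient of f over ℝⁿ. -/
noncomputable section

open Real
open scoped RealInnerProductSpace

/-- (Generalized Malgrange inequality) If `f ∈ C^{1,α}(ℝⁿ)` is nonnegative and `C ≥ 0` is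
any `α`-Hölder constant for the gradient `∇f` (in particular the Hölder seminorm
`[∇f]_α`), then `|∇f(x)| ≤ ((α+1)/α^{α/(1+α)}) · C^{1/(1+α)} · f(x)^{α/(1+α)}`. -/
theorem generalized_malgrange_inequality (n : ℕ) (α : ℝ) (hα : 0 < α) (hα1 : α ≤ 1)
    (f : EuclideanSpace ℝ (Fin n) → ℝ)
    (hf0 : ∀ x, 0 ≤ f x)
    (hf : ContDiff ℝ 1 f)
    (C : ℝ) (hC : 0 ≤ C)
    (hgrad : ∀ x y, ‖gradient f x - gradient f y‖ ≤ C * ‖x - y‖ ^ α) :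
    ∀ x, ‖gradient f x‖ ≤
      (α + 1) / α ^ (α / (1 + α)) * C ^ (1 / (1 + α)) * f x ^ (α / (1 + α)) := by
  intro x
  have h1α : (0:ℝ) < 1 + α := by linarith
  set g := gradient f x with hg
  have hfd : Differentiable ℝ f := hf.differentiable one_ne_zero
  -- gradient inner formula
  have hfderiv : ∀ y v, fderiv ℝ f y v = (inner ℝ (gradient f y) ( v) : ℝ) := by
    intro y v
    rw [← InnerProductSpace.toDual_apply_apply]
    congr 1
    simp [gradient]
  -- key inequality
  have key : ∀ t : ℝ, 0 ≤ t → t * ‖g‖ ≤ f x + C / (1 + α) * t ^ (1 + α) := by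
    intro t ht
    rcases eq_or_ne g 0 with h0 | h0
    · have : (0:ℝ) ≤ C / (1 + α) * t ^ (1 + α) := by positivity
      simp [h0]; linarith [hf0 x]
    have hgn : (0:ℝ) < ‖g‖ := norm_pos_iff.mpr h0
    set v : EuclideanSpace ℝ (Fin n) := -(‖g‖⁻¹ • g) with hv
    have hvn : ‖v‖ = 1 := by
      simp [hv, norm_smul, abs_of_pos (inv_pos.mpr hgn), inv_mul_cancel₀ hgn.ne']
    have hgv : (inner ℝ g v : ℝ) = -‖g‖ := by
      rw [hv, inner_neg_right, real_inner_smul_right, real_inner_self_eq_norm_sq, sq,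
        inv_mul_cancel_left₀ hgn.ne']
    set G : ℝ → ℝ := fun s => f x - s * ‖g‖ + C / (1 + α) * s ^ (1 + α) - f (x + s • v)
      with hGdef
    have hline : ∀ s : ℝ, HasDerivAt (fun s : ℝ => x + s • v) v s := by
      intro s
      simpa using ((hasDerivAt_id s).smul_const v).const_add x
    have hFd : ∀ s : ℝ, HasDerivAt (fun s => f (x + s • v))
        ((inner ℝ (gradient f (x + s • v)) ( v) : ℝ)) s := by
      intro s
      have := ((hfd (x + s • v)).hasFDerivAt).comp_hasDerivAt s (hline s)
      rw [hfderiv] at this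
      exact this
    have hGd : ∀ s : ℝ, HasDerivAt G
        (-‖g‖ + C / (1 + α) * ((1 + α) * s ^ α) - (inner ℝ (gradient f (x + s • v)) ( v) : ℝ)) s := by
      intro s
      have h1 : HasDerivAt (fun s : ℝ => f x - s * ‖g‖) (-‖g‖) s := by
        simpa using ((hasDerivAt_id s).mul_const ‖g‖).const_sub (f x) |>.neg.neg
      have h2 : HasDerivAt (fun s : ℝ => s ^ (1 + α)) ((1 + α) * s ^ α) s := by
        have := Real.hasDerivAt_rpow_const (x := s) (p := 1 + α) (Or.inr (by linarith))
        simpa using this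
      have h3 := (h1.add (h2.const_mul (C / (1 + α)))).sub (hFd s)
      exact h3
    have hGdiff : Differentiable ℝ G := fun s => (hGd s).differentiableAt
    have hmono : MonotoneOn G (Set.Ici 0) := by
      apply monotoneOn_of_deriv_nonneg (convex_Ici 0) hGdiff.continuous.continuousOn
        hGdiff.differentiableOn
      intro s hs
      rw [interior_Ici] at hs
      rw [(hGd s).deriv]
      have hs0 : (0:ℝ) < s := hs
      have hnear : ‖gradient f (x + s • v) - g‖ ≤ C * s ^ α := by
        have := hgrad (x + s • v) x
        simpa [norm_smul, abs_of_pos hs0, hvn] using this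
      have habs : |(inner ℝ (gradient f (x + s • v) - g) ( v) : ℝ)| ≤ C * s ^ α := by
        calc |(inner ℝ (gradient f (x + s • v) - g) ( v) : ℝ)| ≤ ‖gradient f (x + s • v) - g‖ * ‖v‖ :=
              abs_real_inner_le_norm _ _
          _ ≤ C * s ^ α := by rw [hvn, mul_one]; exact hnear
      have hsplit : (inner ℝ (gradient f (x + s • v)) ( v) : ℝ)
          = (inner ℝ (gradient f (x + s • v) - g) ( v) : ℝ) + (inner ℝ (g) ( v) : ℝ) := by
        rw [← inner_add_left, sub_add_cancel]
      rw [hsplit, hgv]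
      have := abs_le.mp habs
      have hCs : C / (1 + α) * ((1 + α) * s ^ α) = C * s ^ α := by field_simp
      linarith [this.2]
    have hG0 : G 0 = 0 := by
      simp [hGdef, Real.zero_rpow (by linarith : (1:ℝ) + α ≠ 0)]
    have := hmono (Set.self_mem_Ici) (Set.mem_Ici.mpr ht) ht
    rw [hG0] at this
    have hfnn := hf0 (x + t • v)
    simp only [hGdef] at this
    linarith
  -- now conclude
  set e := α / (1 + α) with he
  have he1 : e ≤ 1 := by
    rw [he, div_le_one h1α]; linarith
  have hepos : 0 < e := div_pos hα h1α
  have hfx : 0 ≤ f x := hf0 x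
  have hαe : 0 < α ^ e := Real.rpow_pos_of_pos hα _
  have hRHSnn : 0 ≤ (α + 1) / α ^ e * C ^ (1 / (1 + α)) * f x ^ e :=
    mul_nonneg (mul_nonneg (div_nonneg (by linarith) hαe.le) (Real.rpow_nonneg hC _))
      (Real.rpow_nonneg hfx _)
  rcases eq_or_lt_of_le (norm_nonneg g) with hg0 | hgn
  · rw [← hg0]; exact hRHSnn
  rcases eq_or_lt_of_le hC with hC0 | hCpos
  · exfalso
    have := key ((f x + 1) / ‖g‖) (le_of_lt (div_pos (by linarith) hgn))
    rw [← hC0] at this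
    rw [div_mul_cancel₀ _ hgn.ne'] at this
    simp at this
    linarith
  -- main case
  set B := ‖g‖ with hB
  set t := (B / C) ^ (1 / α) with htdef
  have hBC : 0 < B / C := div_pos hgn hCpos
  have htpos : 0 < t := Real.rpow_pos_of_pos hBC _
  have hkey := key t htpos.le
  have hgn' : (0:ℝ) < B := hgn
  have hCpow : 0 < C ^ (1 / α) := Real.rpow_pos_of_pos hCpos _
  have htpow : t ^ (1 + α) = t * (B / C) := by
    rw [htdef, ← Real.rpow_mul hBC.le,
      show 1 / α * (1 + α) = 1 / α + 1 by field_simp,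
      Real.rpow_add hBC, Real.rpow_one]
  have hsimp : C / (1 + α) * (t * (B / C)) = t * B / (1 + α) := by
    field_simp
  have h2 : t * B * α ≤ f x * (1 + α) := by
    have h := hkey
    rw [htpow, hsimp] at h
    have hdiv : t * B / (1 + α) * (1 + α) = t * B := div_mul_cancel₀ _ h1α.ne'
    nlinarith [h, hdiv]
  have ht' : t = B ^ (1 / α) / C ^ (1 / α) := by
    rw [htdef, Real.div_rpow hgn'.le hCpos.le]
  rw [ht'] at h2
  have hmul := mul_le_mul_of_nonneg_right h2 hCpow.le
  have heq : B ^ (1 / α) / C ^ (1 / α) * B * α * C ^ (1 / α) = B ^ (1 / α) * B * α := by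
    field_simp
  rw [heq] at hmul
  have h3 : B ^ ((1 + α) / α) ≤ (1 + α) / α * (C ^ (1 / α) * f x) := by
    have hBpow : B ^ ((1 + α) / α) = B ^ (1 / α) * B := by
      rw [show (1 + α) / α = 1 / α + 1 by field_simp, Real.rpow_add hgn', Real.rpow_one]
    rw [hBpow, div_mul_eq_mul_div, le_div_iff₀ hα]
    calc B ^ (1 / α) * B * α ≤ f x * (1 + α) * C ^ (1 / α) := hmul
      _ = (1 + α) * (C ^ (1 / α) * f x) := by ring
  have hone : (1 + α) / α * e = 1 := by rw [he]; field_simp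
  have hfinal : B ≤ ((1 + α) / α * (C ^ (1 / α) * f x)) ^ e := by
    have hBe : (B ^ ((1 + α) / α)) ^ e = B := by
      rw [← Real.rpow_mul hgn'.le, hone, Real.rpow_one]
    rw [← hBe]
    exact Real.rpow_le_rpow (Real.rpow_nonneg hgn'.le _) h3 hepos.le
  have hCfnn : 0 ≤ C ^ (1 / α) * f x := mul_nonneg (Real.rpow_nonneg hC _) hfx
  have hR : ((1 + α) / α * (C ^ (1 / α) * f x)) ^ e
      = (1 + α) ^ e / α ^ e * (C ^ (1 / (1 + α)) * f x ^ e) := by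
    rw [Real.mul_rpow (div_nonneg (by linarith) hα.le) hCfnn,
      Real.mul_rpow (Real.rpow_nonneg hC _) hfx,
      Real.div_rpow (by linarith : (0:ℝ) ≤ 1 + α) hα.le,
      ← Real.rpow_mul hC, show 1 / α * e = 1 / (1 + α) by rw [he]; field_simp]
  have hle : (1 + α) ^ e ≤ 1 + α := by
    calc (1 + α) ^ e ≤ (1 + α) ^ (1:ℝ) :=
          Real.rpow_le_rpow_of_exponent_le (by linarith) he1
      _ = 1 + α := Real.rpow_one _
  calc B ≤ ((1 + α) / α * (C ^ (1 / α) * f x)) ^ e := hfinal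
    _ = (1 + α) ^ e / α ^ e * (C ^ (1 / (1 + α)) * f x ^ e) := hR
    _ ≤ (1 + α) / α ^ e * (C ^ (1 / (1 + α)) * f x ^ e) := by
        apply mul_le_mul_of_nonneg_right _
          (mul_nonneg (Real.rpow_nonneg hC _) (Real.rpow_nonneg hfx _))
        gcongr
    _ = (α + 1) / α ^ e * C ^ (1 / (1 + α)) * f x ^ e := by ring
end
end

section
/- Let 0 < α ≤ 1 and suppose f ∈ C^{1,α}(ℝⁿ) is nonnegative on ℝⁿ. Then the function √f belongs to C^{(1+α)/2}(ℝⁿ); more precisely, for all x, y ∈ ℝⁿ, |√(f(x)) − √(f(y))| ≤ ([∇f]_α/α)^{1/2} · |x − y|^{(1+α)/2}, i.e., [√f]_{(1+α)/2, ℝⁿ} ≤ ([∇f]_α/α)^{1/2}. -/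
noncomputable section

open intervalIntegral Real

/-- continuity of a Hölder function -/
lemma holder_continuous {α C : ℝ} (hα : 0 < α) {D : ℝ → ℝ}
    (hH : ∀ s t, |D s - D t| ≤ C * |s - t| ^ α) : Continuous D := by
  rw [continuous_iff_continuousAt]
  intro t
  rw [ContinuousAt, tendsto_iff_dist_tendsto_zero]
  have h1 : Filter.Tendsto (fun s : ℝ => |s - t|) (nhds t) (nhds 0) := by
    have hc : Continuous (fun s : ℝ => |s - t|) := (continuous_id.sub continuous_const).abs
    simpa using hc.tendsto t
  have h2 : Filter.Tendsto (fun s : ℝ => C * |s - t| ^ α) (nhds t) (nhds 0) := by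
    have h3 : Filter.Tendsto (fun r : ℝ => r ^ α) (nhds 0) (nhds 0) := by
      have := (Real.continuousAt_rpow_const 0 α (Or.inr hα.le))
      simpa [Real.zero_rpow hα.ne'] using this.tendsto
    simpa using (h3.comp h1).const_mul C
  exact squeeze_zero (fun s => dist_nonneg) (fun s => by simpa [Real.dist_eq] using hH s t) h2

/-- one-sided Taylor bound at 0, evaluated at x ≥ 0 -/
lemma taylor_bound {α C : ℝ} (hα : 0 < α) (hC : 0 ≤ C) {φ : ℝ → ℝ}
    (hφ : Differentiable ℝ φ)
    (hH : ∀ s t, |deriv φ s - deriv φ t| ≤ C * |s - t| ^ α)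
    {x : ℝ} (hx : 0 ≤ x) :
    φ x ≤ φ 0 + x * deriv φ 0 + C * x ^ (1 + α) / (1 + α) := by
  have hDc : Continuous (deriv φ) := holder_continuous hα hH
  have hftc : ∫ s in (0:ℝ)..x, deriv φ s = φ x - φ 0 := by
    apply intervalIntegral.integral_deriv_eq_sub (fun t _ => hφ t)
    exact hDc.intervalIntegrable 0 x
  have hint1 : IntervalIntegrable (fun s => deriv φ s - deriv φ 0) MeasureTheory.volume 0 x :=
    (hDc.sub continuous_const).intervalIntegrable 0 x
  have hint2 : IntervalIntegrable (fun s : ℝ => C * s ^ α) MeasureTheory.volume 0 x :=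
    (intervalIntegral.intervalIntegrable_rpow (Or.inl hα.le)).const_mul C
  have hmono : ∫ s in (0:ℝ)..x, (deriv φ s - deriv φ 0) ≤ ∫ s in (0:ℝ)..x, C * s ^ α := by
    apply intervalIntegral.integral_mono_on hx hint1 hint2
    intro s hs
    calc deriv φ s - deriv φ 0 ≤ |deriv φ s - deriv φ 0| := le_abs_self _
    _ ≤ C * |s - 0| ^ α := hH s 0
    _ = C * s ^ α := by rw [sub_zero, abs_of_nonneg hs.1]
  have hval : ∫ s in (0:ℝ)..x, C * s ^ α = C * x ^ (1 + α) / (1 + α) := by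
    rw [intervalIntegral.integral_const_mul, integral_rpow (Or.inl (by linarith))]
    rw [Real.zero_rpow (by linarith)]
    ring_nf
  have hsplit : ∫ s in (0:ℝ)..x, (deriv φ s - deriv φ 0)
      = (φ x - φ 0) - x * deriv φ 0 := by
    rw [intervalIntegral.integral_sub (hDc.intervalIntegrable 0 x)
      (intervalIntegrable_const), hftc, intervalIntegral.integral_const]
    simp [smul_eq_mul]
  rw [hsplit, hval] at hmono
  linarith

/-- one-sided main 1D estimate -/
lemma one_sided {α C : ℝ} (hα : 0 < α) (hα1 : α ≤ 1) (hC : 0 ≤ C) {φ : ℝ → ℝ}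
    (hφ : Differentiable ℝ φ) (hpos : ∀ t, 0 ≤ φ t)
    (hH : ∀ s t, |deriv φ s - deriv φ t| ≤ C * |s - t| ^ α) :
    Real.sqrt (φ 1) ≤ Real.sqrt (φ 0) + Real.sqrt (C / α) := by
  set A := φ 0 with hA
  set D := deriv φ 0 with hD
  set B := C / α with hB
  have hA0 : 0 ≤ A := hpos 0
  have hB0 : 0 ≤ B := div_nonneg hC hα.le
  -- key fact K1: ∀ t > 0, D ≤ A / t + C * t ^ α / (1 + α)
  have hK1 : ∀ t : ℝ, 0 < t → D ≤ A / t + C * t ^ α / (1 + α) := by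
    intro t ht
    -- apply taylor to ψ s = φ (-s)
    have hψd : Differentiable ℝ (fun s : ℝ => φ (-s)) := hφ.comp differentiable_neg
    have hψderiv : ∀ s, deriv (fun s : ℝ => φ (-s)) s = -deriv φ (-s) := fun s =>
      deriv_comp_neg φ s
    have hψH : ∀ s t, |deriv (fun s : ℝ => φ (-s)) s - deriv (fun s : ℝ => φ (-s)) t|
        ≤ C * |s - t| ^ α := by
      intro s t
      rw [hψderiv, hψderiv]
      have := hH (-t) (-s)
      calc |-deriv φ (-s) - -deriv φ (-t)| = |deriv φ (-t) - deriv φ (-s)| := by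
            rw [show -deriv φ (-s) - -deriv φ (-t) = deriv φ (-t) - deriv φ (-s) by ring]
      _ ≤ C * |(-t) - (-s)| ^ α := hH (-t) (-s)
      _ = C * |s - t| ^ α := by rw [show (-t) - (-s) = -(t - s) by ring, abs_neg, abs_sub_comm]
    have := taylor_bound hα hC hψd hψH ht.le
    simp only [hψderiv, neg_zero] at this
    -- 0 ≤ φ (-t) ≤ A - t * D + C * t^(1+α)/(1+α)
    have h0 : (0:ℝ) ≤ A + t * -D + C * t ^ (1 + α) / (1 + α) := le_trans (hpos (-t)) this
    have ht1a : t ^ (1 + α) = t * t ^ α := by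
      rw [Real.rpow_add ht, Real.rpow_one]
    rw [ht1a] at h0
    have h4 : t * D ≤ A + C * (t * t ^ α) / (1 + α) := by linarith
    have h5 := mul_le_mul_of_nonneg_right h4 (show (0:ℝ) ≤ 1 + α by linarith)
    rw [add_mul, div_mul_cancel₀ _ (show (1:ℝ) + α ≠ 0 by positivity)] at h5
    rw [div_add_div _ _ ht.ne' (show (1:ℝ) + α ≠ 0 by positivity)]
    rw [le_div_iff₀ (by positivity)]
    nlinarith [h5]
  -- key fact K2
  have hK2 : φ 1 ≤ A + D + C / (1 + α) := by
    have := taylor_bound hα hC hφ hH (zero_le_one (α := ℝ))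
    rwa [Real.one_rpow, mul_one, one_mul] at this
  -- suffices to bound φ 1 by (√A + √B)^2
  have key : φ 1 ≤ (Real.sqrt A + Real.sqrt B) ^ 2 := by
    have hsq : (Real.sqrt A + Real.sqrt B) ^ 2
        = A + 2 * Real.sqrt A * Real.sqrt B + B := by
      rw [add_sq, Real.sq_sqrt hA0, Real.sq_sqrt hB0]
    rw [hsq]
    have hsA : 0 ≤ Real.sqrt A := Real.sqrt_nonneg A
    have hsB : 0 ≤ Real.sqrt B := Real.sqrt_nonneg B
    have h1 : Real.sqrt A * Real.sqrt A = A := Real.mul_self_sqrt hA0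
    have h2 : Real.sqrt B * Real.sqrt B = B := Real.mul_self_sqrt hB0
    have hCαB : C = α * B := by
      rw [hB, mul_div_assoc', eq_div_iff hα.ne']; ring
    by_cases hCz : C = 0
    · -- B = 0; D ≤ 0
      have hBz : B = 0 := by rw [hB, hCz, zero_div]
      have hDle : D ≤ 0 := by
        by_contra hDpos
        push_neg at hDpos
        have ht : (0:ℝ) < A / D + 1 := by positivity
        have := hK1 (A / D + 1) ht
        rw [hCz] at this
        simp only [zero_mul, zero_div, add_zero] at this
        rw [le_div_iff₀ ht] at this
        have hc : A / D * D = A := div_mul_cancel₀ A (ne_of_gt hDpos)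
        nlinarith [hc]
      rw [hCz] at hK2
      simp only [zero_div, add_zero] at hK2
      nlinarith [mul_nonneg hsA hsB, hBz, hDle, hK2]
    · have hCpos : 0 < C := lt_of_le_of_ne hC (Ne.symm hCz)
      have hBpos : 0 < B := div_pos hCpos hα
      rcases le_total A B with hAB | hAB
      · -- case A ≤ B : take t = 1
        have := hK1 1 one_pos
        rw [Real.one_rpow, mul_one, div_one] at this
        have hsAB : Real.sqrt A ≤ Real.sqrt B := Real.sqrt_le_sqrt hAB
        -- A ≤ √A √B
        have hAle : A ≤ Real.sqrt A * Real.sqrt B := by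
          nlinarith [mul_le_mul_of_nonneg_left hsAB hsA]
        have hE : 2 * (C / (1 + α)) ≤ B := by
          have h' : 2 * C ≤ B * (1 + α) := by
            nlinarith [mul_nonneg hB0 (show (0:ℝ) ≤ 1 - α by linarith)]
          calc 2 * (C / (1 + α)) = 2 * C / (1 + α) := by ring
          _ ≤ B := by rw [div_le_iff₀ (by linarith : (0:ℝ) < 1 + α)]; linarith
        linarith [this, hK2, hAle, hE, mul_nonneg hsA hsB]
      · -- case B ≤ A : take t = √A / √B
        have hsBpos : 0 < Real.sqrt B := Real.sqrt_pos.mpr hBpos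
        have hsApos : 0 < Real.sqrt A := Real.sqrt_pos.mpr (lt_of_lt_of_le hBpos hAB)
        set t := Real.sqrt A / Real.sqrt B with htdef
        have htpos : 0 < t := div_pos hsApos hsBpos
        have ht1 : 1 ≤ t := by
          rw [htdef, le_div_iff₀ hsBpos, one_mul]
          exact Real.sqrt_le_sqrt hAB
        have htα : t ^ α ≤ t := by
          calc t ^ α ≤ t ^ (1:ℝ) := Real.rpow_le_rpow_of_exponent_le ht1 hα1
          _ = t := Real.rpow_one t
        have hAt : A / t = Real.sqrt A * Real.sqrt B := by
          rw [htdef, div_div_eq_mul_div, div_eq_iff hsApos.ne']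
          linear_combination (-Real.sqrt B) * h1
        have hBt : B * t = Real.sqrt A * Real.sqrt B := by
          rw [htdef, ← mul_div_assoc, div_eq_iff hsBpos.ne']
          linear_combination (-Real.sqrt A) * h2
        have hk := hK1 t htpos
        rw [hAt] at hk
        have hterm : C * t ^ α / (1 + α) ≤ Real.sqrt A * Real.sqrt B := by
          calc C * t ^ α / (1 + α) ≤ C * t / (1 + α) := by
                gcongr
          _ = α * (B * t) / (1 + α) := by rw [hCαB]; ring
          _ = α / (1 + α) * (Real.sqrt A * Real.sqrt B) := by rw [hBt]; ring
          _ ≤ 1 * (Real.sqrt A * Real.sqrt B) := by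
                apply mul_le_mul_of_nonneg_right ?_ (by positivity)
                rw [div_le_one (by linarith)]; linarith
          _ = Real.sqrt A * Real.sqrt B := one_mul _
        have hfrac : C / (1 + α) ≤ B := by
          rw [hCαB, div_le_iff₀ (by linarith : (0:ℝ) < 1 + α)]
          nlinarith [hB0]
        linarith [hk, hterm, hfrac, hK2]
  calc Real.sqrt (φ 1) ≤ Real.sqrt ((Real.sqrt A + Real.sqrt B) ^ 2) :=
        Real.sqrt_le_sqrt key
  _ = Real.sqrt A + Real.sqrt B := Real.sqrt_sq (by positivity)

/-- two-sided 1D estimate -/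
lemma one_dim {α C : ℝ} (hα : 0 < α) (hα1 : α ≤ 1) (hC : 0 ≤ C) {φ : ℝ → ℝ}
    (hφ : Differentiable ℝ φ) (hpos : ∀ t, 0 ≤ φ t)
    (hH : ∀ s t, |deriv φ s - deriv φ t| ≤ C * |s - t| ^ α) :
    |Real.sqrt (φ 1) - Real.sqrt (φ 0)| ≤ Real.sqrt (C / α) := by
  rw [abs_sub_le_iff]
  constructor
  · have := one_sided hα hα1 hC hφ hpos hH
    linarith
  · -- apply one_sided to ψ t = φ (1 - t)
    set ψ : ℝ → ℝ := fun t => φ (1 - t) with hψ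
    have hψd : Differentiable ℝ ψ := hφ.comp (differentiable_const _ |>.sub differentiable_id)
    have hψderiv : ∀ s, deriv ψ s = -deriv φ (1 - s) := fun s => deriv_comp_const_sub φ 1 s
    have hψH : ∀ s t, |deriv ψ s - deriv ψ t| ≤ C * |s - t| ^ α := by
      intro s t
      rw [hψderiv, hψderiv]
      calc |-deriv φ (1 - s) - -deriv φ (1 - t)|
          = |deriv φ (1 - t) - deriv φ (1 - s)| := by
            rw [show -deriv φ (1 - s) - -deriv φ (1 - t) = deriv φ (1 - t) - deriv φ (1 - s) by ring]
      _ ≤ C * |(1 - t) - (1 - s)| ^ α := hH _ _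
      _ = C * |s - t| ^ α := by rw [show (1 - t) - (1 - s) = s - t by ring]
    have h := one_sided hα hα1 hC hψd (fun t => hpos _) hψH
    have e1 : ψ 1 = φ 0 := by norm_num [hψ]
    have e0 : ψ 0 = φ 1 := by norm_num [hψ]
    rw [e1, e0] at h
    linarith

/-- If `f ∈ C^{1,α}(ℝⁿ)` is nonnegative and `C ≥ 0` is any `α`-Hölder constant for the
gradient `∇f` (in particular the Hölder seminorm `[∇f]_α`), then `√f` is
`(1+α)/2`-Hölder with `[√f]_{(1+α)/2} ≤ (C/α)^{1/2}`:
`|√(f x) − √(f y)| ≤ √(C/α) · ‖x − y‖^{(1+α)/2}` for all `x, y`. -/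
theorem sqrt_half_regular (n : ℕ) (α : ℝ) (hα : 0 < α) (hα1 : α ≤ 1)
    (f : EuclideanSpace ℝ (Fin n) → ℝ)
    (hf0 : ∀ x, 0 ≤ f x)
    (hf : ContDiff ℝ 1 f)
    (C : ℝ) (hC : 0 ≤ C)
    (hgrad : ∀ x y, ‖gradient f x - gradient f y‖ ≤ C * ‖x - y‖ ^ α) :
    ∀ x y, |Real.sqrt (f x) - Real.sqrt (f y)| ≤
      Real.sqrt (C / α) * ‖x - y‖ ^ ((1 + α) / 2) := by
  intro x y
  set v := x - y with hv
  set φ : ℝ → EuclideanSpace ℝ (Fin n) := fun t => y + t • v with hφ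
  have hfd : Differentiable ℝ f := hf.differentiable one_ne_zero
  have hL : ∀ t : ℝ, HasDerivAt φ v t := by
    intro t
    have h1 : HasDerivAt (fun t : ℝ => t • v) ((1:ℝ) • v) t :=
      (hasDerivAt_id t).smul_const v
    have h2 := h1.const_add y
    rw [one_smul] at h2
    exact h2
  have hcomp : ∀ t : ℝ, HasDerivAt (fun t => f (φ t)) (fderiv ℝ f (φ t) v) t := fun t =>
    (hfd (φ t)).hasFDerivAt.comp_hasDerivAt t (hL t)
  have hderiv : ∀ t : ℝ, deriv (fun t => f (φ t)) t = inner ℝ (gradient f (φ t)) v := by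
    intro t
    rw [(hcomp t).deriv]
    have := (hfd (φ t)).hasGradientAt
    rw [hasGradientAt_iff_hasFDerivAt] at this
    rw [this.fderiv]
    rfl
  have hdiff : Differentiable ℝ (fun t => f (φ t)) := fun t => (hcomp t).differentiableAt
  set C' := C * ‖v‖ ^ (1 + α) with hC'
  have hC'0 : 0 ≤ C' := mul_nonneg hC (Real.rpow_nonneg (norm_nonneg v) _)
  have hH : ∀ s t : ℝ, |deriv (fun t => f (φ t)) s - deriv (fun t => f (φ t)) t|
      ≤ C' * |s - t| ^ α := by
    intro s t
    rw [hderiv, hderiv, ← inner_sub_left]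
    have hst : φ s - φ t = (s - t) • v := by
      simp only [hφ]
      rw [add_sub_add_left_eq_sub, ← sub_smul]
    calc |inner ℝ (gradient f (φ s) - gradient f (φ t)) v|
        ≤ ‖gradient f (φ s) - gradient f (φ t)‖ * ‖v‖ := abs_real_inner_le_norm _ _
    _ ≤ (C * ‖φ s - φ t‖ ^ α) * ‖v‖ := by
        apply mul_le_mul_of_nonneg_right _ (norm_nonneg v)
        simpa using hgrad (φ s) (φ t)
    _ = C' * |s - t| ^ α := by
        rw [hst, norm_smul, Real.norm_eq_abs,
          Real.mul_rpow (abs_nonneg _) (norm_nonneg v), hC',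
          Real.rpow_add' (norm_nonneg v) (by positivity : (1:ℝ) + α ≠ 0), Real.rpow_one]
        ring
  have h1d := one_dim hα hα1 hC'0 hdiff (fun t => hf0 (φ t)) hH
  have e1 : φ 1 = x := by simp [hφ, hv]
  have e0 : φ 0 = y := by simp [hφ]
  rw [e1, e0] at h1d
  calc |Real.sqrt (f x) - Real.sqrt (f y)| ≤ Real.sqrt (C' / α) := h1d
  _ = Real.sqrt (C / α) * ‖x - y‖ ^ ((1 + α) / 2) := by
      rw [hC', show C * ‖v‖ ^ (1 + α) / α = (C / α) * ‖v‖ ^ (1 + α) by ring,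
        Real.sqrt_mul (div_nonneg hC hα.le)]
      congr 1
      rw [Real.sqrt_eq_rpow, ← Real.rpow_mul (norm_nonneg v),
        show (1 + α) * ((1:ℝ)/2) = (1 + α) / 2 by ring, hv]
end
end

section
/- Let Ω ⊆ ℝⁿ, let 0 < α ≤ 1, let f : Ω → ℝ be nonnegative with finite α-Hölder seminorm [f]_α = [f]_{α,Ω}, let β > 1 and ε > 0. Then for all x, y ∈ Ω: |f(x)^β − f(y)^β| ≤ ((1+ε)·[f]_α^β / ((1+ε)^{1/(β−1)} − 1)^{β−1}) · |x − y|^{αβ} + ε · max{f(x)^β, f(y)^β}. -/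
noncomputable section

lemma key_convex (u v θ β : ℝ) (hu : 0 ≤ u) (hv : 0 ≤ v) (hθ : 0 < θ) (hθ1 : θ < 1)
    (hβ : 1 ≤ β) :
    (u + v) ^ β ≤ θ ^ (1 - β) * u ^ β + (1 - θ) ^ (1 - β) * v ^ β := by
  have h1θ : 0 < 1 - θ := by linarith
  have h := (convexOn_rpow hβ).2 (Set.mem_Ici.2 (div_nonneg hu hθ.le))
      (Set.mem_Ici.2 (div_nonneg hv h1θ.le)) hθ.le h1θ.le (by ring)
  simp only [smul_eq_mul] at h
  have heq : θ * (u / θ) + (1 - θ) * (v / (1 - θ)) = u + v := by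
    field_simp
  rw [heq] at h
  calc (u + v) ^ β ≤ θ * (u / θ) ^ β + (1 - θ) * (v / (1 - θ)) ^ β := h
    _ = θ ^ (1 - β) * u ^ β + (1 - θ) ^ (1 - β) * v ^ β := by
        rw [Real.div_rpow hu hθ.le, Real.div_rpow hv h1θ.le,
          Real.rpow_sub hθ, Real.rpow_sub h1θ, Real.rpow_one]
        have hθβ : (0:ℝ) < θ ^ β := Real.rpow_pos_of_pos hθ β
        have h1θβ : (0:ℝ) < (1 - θ) ^ β := Real.rpow_pos_of_pos h1θ β
        field_simp
        rw [Real.rpow_one]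
        ring

lemma one_sided_s10 (a b t β ε : ℝ) (hb : 0 ≤ b) (hab : b ≤ a) (ht : a - b ≤ t)
    (hβ : 1 < β) (hε : 0 < ε) :
    a ^ β - b ^ β ≤ (1 + ε) / ((1 + ε) ^ (1 / (β - 1)) - 1) ^ (β - 1) * t ^ β + ε * b ^ β := by
  set δ : ℝ := (1 + ε) ^ (1 / (β - 1)) - 1 with hδdef
  have hβ1 : 0 < β - 1 := by linarith
  have hδ : 0 < δ := by
    have h1 : (1:ℝ) < (1 + ε) ^ (1 / (β - 1)) :=
      (Real.one_lt_rpow_iff_of_pos (by linarith)).2 (Or.inl ⟨by linarith, by positivity⟩)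
    rw [hδdef]; linarith
  have h1δ : (0:ℝ) < 1 + δ := by linarith
  have ht0 : 0 ≤ t := le_trans (by linarith) ht
  set θ : ℝ := 1 / (1 + δ) with hθdef
  have hθ : 0 < θ := by positivity
  have hθ1 : θ < 1 := by
    rw [hθdef, div_lt_one h1δ]; linarith
  have key := key_convex b t θ β hb ht0 hθ hθ1 hβ.le
  have hpow : a ^ β ≤ (b + t) ^ β := Real.rpow_le_rpow (by linarith) (by linarith) (by linarith)
  have hδpow : (1 + δ) ^ (β - 1) = 1 + ε := by
    have : (1 + δ) = (1 + ε) ^ (1 / (β - 1)) := by simp [hδdef]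
    rw [this, ← Real.rpow_mul (by linarith), one_div,
      inv_mul_cancel₀ (ne_of_gt hβ1), Real.rpow_one]
  have hθpow : θ ^ (1 - β) = 1 + ε := by
    rw [hθdef, Real.div_rpow zero_le_one h1δ.le, Real.one_rpow]
    have h2 : (1 + δ) ^ ((1:ℝ) - β) = ((1 + δ) ^ (β - 1))⁻¹ := by
      rw [show (1:ℝ) - β = -(β - 1) by ring, Real.rpow_neg h1δ.le]
    rw [h2, hδpow, one_div, inv_inv]
  have h1θpow : (1 - θ) ^ (1 - β) = (1 + ε) / δ ^ (β - 1) := by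
    have h1θ : 1 - θ = δ / (1 + δ) := by
      rw [hθdef]; field_simp; ring
    rw [h1θ, Real.div_rpow hδ.le h1δ.le]
    rw [show (1:ℝ) - β = -(β - 1) by ring, Real.rpow_neg hδ.le, Real.rpow_neg h1δ.le,
      hδpow]
    field_simp
  rw [hθpow, h1θpow] at key
  have hd : (0:ℝ) < δ ^ (β - 1) := Real.rpow_pos_of_pos hδ _
  nlinarith [Real.rpow_nonneg hb β, Real.rpow_nonneg ht0 β]

/-- "Almost Lipschitz" estimate for powers: if `f` is nonnegative on `Ω ⊆ ℝⁿ` with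
`α`-Hölder constant `C ≥ 0` on `Ω` (in particular `C = [f]_{α,Ω}`), then for `β > 1` and
`ε > 0`,
`|f(x)^β − f(y)^β| ≤ ((1+ε)·C^β/((1+ε)^{1/(β−1)} − 1)^{β−1})·|x−y|^{αβ}
  + ε·max{f(x)^β, f(y)^β}` for all `x, y ∈ Ω`. -/
theorem power_almost_lipschitz {n : ℕ} (Ω : Set (EuclideanSpace ℝ (Fin n)))
    (α : ℝ) (hα : 0 < α) (hα1 : α ≤ 1)
    (f : EuclideanSpace ℝ (Fin n) → ℝ)
    (hf0 : ∀ x ∈ Ω, 0 ≤ f x)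
    (C : ℝ) (hC : 0 ≤ C)
    (hHolder : ∀ x ∈ Ω, ∀ y ∈ Ω, |f x - f y| ≤ C * ‖x - y‖ ^ α)
    (β ε : ℝ) (hβ : 1 < β) (hε : 0 < ε) :
    ∀ x ∈ Ω, ∀ y ∈ Ω,
      |f x ^ β - f y ^ β| ≤
        (1 + ε) * C ^ β / ((1 + ε) ^ (1 / (β - 1)) - 1) ^ (β - 1) * ‖x - y‖ ^ (α * β)
          + ε * max (f x ^ β) (f y ^ β) := by
  have main : ∀ x ∈ Ω, ∀ y ∈ Ω, f y ≤ f x →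
      |f x ^ β - f y ^ β| ≤
        (1 + ε) * C ^ β / ((1 + ε) ^ (1 / (β - 1)) - 1) ^ (β - 1) * ‖x - y‖ ^ (α * β)
          + ε * max (f x ^ β) (f y ^ β) := by
    intro x hx y hy hle
    have hbx := hf0 x hx
    have hby := hf0 y hy
    have habs : |f x ^ β - f y ^ β| = f x ^ β - f y ^ β := by
      rw [abs_of_nonneg]
      have := Real.rpow_le_rpow hby hle (by linarith : (0:ℝ) ≤ β)
      linarith
    have hHol : f x - f y ≤ C * ‖x - y‖ ^ α := by
      have := hHolder x hx y hy
      exact (abs_le.1 this).2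
    have hkey := one_sided_s10 (f x) (f y) (C * ‖x - y‖ ^ α) β ε hby hle hHol hβ hε
    have htpow : (C * ‖x - y‖ ^ α) ^ β = C ^ β * ‖x - y‖ ^ (α * β) := by
      rw [Real.mul_rpow hC (Real.rpow_nonneg (norm_nonneg _) α),
        ← Real.rpow_mul (norm_nonneg _)]
    rw [htpow] at hkey
    have hmax : ε * f y ^ β ≤ ε * max (f x ^ β) (f y ^ β) := by
      apply mul_le_mul_of_nonneg_left (le_max_right _ _) hε.le
    rw [habs]
    calc f x ^ β - f y ^ β
        ≤ (1 + ε) / ((1 + ε) ^ (1 / (β - 1)) - 1) ^ (β - 1) * (C ^ β * ‖x - y‖ ^ (α * β))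
          + ε * f y ^ β := hkey
      _ ≤ (1 + ε) * C ^ β / ((1 + ε) ^ (1 / (β - 1)) - 1) ^ (β - 1) * ‖x - y‖ ^ (α * β)
          + ε * max (f x ^ β) (f y ^ β) := by
          have : (1 + ε) / ((1 + ε) ^ (1 / (β - 1)) - 1) ^ (β - 1) * (C ^ β * ‖x - y‖ ^ (α * β))
              = (1 + ε) * C ^ β / ((1 + ε) ^ (1 / (β - 1)) - 1) ^ (β - 1) * ‖x - y‖ ^ (α * β) := by
            ring
          rw [this]
          linarith
  intro x hx y hy
  rcases le_total (f y) (f x) with h | h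
  · exact main x hx y hy h
  · have := main y hy x hx h
    rw [abs_sub_comm, norm_sub_rev, max_comm] at this
    exact this
end
end

section
/- The Motzkin polynomial M(x,y) = x⁴y² + x²y⁴ − 3x²y² + 1 satisfies M(x,y) ≥ 0 for all (x,y) ∈ ℝ², and M is not a sum of squares of polynomials: there do not exist finitely many polynomials p_1, …, p_m ∈ ℝ[x,y] with M = p_1² + ⋯ + p_m². -/
noncomputable section

open MvPolynomial

section aux

open Polynomial

lemma real_sos_zero {k : ℕ} (r : Fin k → ℝ) (h : ∑ j, r j ^ 2 = 0) : ∀ j, r j = 0 := by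
  intro j
  have h1 : ∀ j ∈ Finset.univ, (0:ℝ) ≤ r j ^ 2 := fun j _ => sq_nonneg _
  have h2 := (Finset.sum_eq_zero_iff_of_nonneg h1).1 h j (Finset.mem_univ j)
  exact pow_eq_zero_iff (by norm_num) |>.1 h2

lemma polyreal_sos_zero {k : ℕ} (r : Fin k → Polynomial ℝ) (h : ∑ j, r j ^ 2 = 0) :
    ∀ j, r j = 0 := by
  intro j
  have key : ∀ t : ℝ, (r j).eval t = 0 := by
    intro t
    have h3 : ∑ i, ((r i).eval t) ^ 2 = 0 := by
      have := congrArg (Polynomial.eval t) h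
      simpa [Polynomial.eval_finset_sum] using this
    exact real_sos_zero _ h3 j
  apply Polynomial.funext
  intro t
  simpa using key t

lemma coeff_sq_of_natDegree_le {R : Type*} [CommRing R] (p : R[X]) (d : ℕ)
    (hp : p.natDegree ≤ d) : (p * p).coeff (2 * d) = p.coeff d * p.coeff d := by
  rw [Polynomial.coeff_mul]
  rw [Finset.sum_eq_single (d, d)]
  · rintro ⟨a, b⟩ hab hne
    rw [Finset.HasAntidiagonal.mem_antidiagonal] at hab
    rcases lt_or_ge d a with h | h
    · rw [Polynomial.coeff_eq_zero_of_natDegree_lt (lt_of_le_of_lt hp h), zero_mul]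
    · have hb : d < b := by
        rcases lt_or_eq_of_le h with h' | h'
        · omega
        · exfalso; apply hne; simp only [Prod.mk.injEq]; omega
      rw [Polynomial.coeff_eq_zero_of_natDegree_lt (lt_of_le_of_lt hp hb), mul_zero]
  · intro h
    exfalso; apply h
    rw [Finset.HasAntidiagonal.mem_antidiagonal]; omega

lemma sos_natDegree_le {R : Type*} [CommRing R]
    (hR : ∀ (k : ℕ) (r : Fin k → R), ∑ j, r j ^ 2 = 0 → ∀ j, r j = 0)
    {m : ℕ} (P : Fin m → R[X]) {n : ℕ}
    (h : (∑ i, P i ^ 2).natDegree ≤ n) :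
    ∀ i, 2 * (P i).natDegree ≤ n := by
  by_contra hc
  push_neg at hc
  obtain ⟨i₀, hi₀⟩ := hc
  have hne : (Finset.univ : Finset (Fin m)).Nonempty := ⟨i₀, Finset.mem_univ _⟩
  set d := Finset.univ.sup (fun i => (P i).natDegree) with hd
  have hdi : ∀ i, (P i).natDegree ≤ d := fun i => Finset.le_sup (f := fun i => (P i).natDegree) (Finset.mem_univ i)
  have hdn : n < 2 * d := lt_of_lt_of_le hi₀ (by have := hdi i₀; omega)
  have hc0 : (∑ i, P i ^ 2).coeff (2 * d) = 0 :=
    Polynomial.coeff_eq_zero_of_natDegree_lt (lt_of_le_of_lt h hdn)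
  have hsum : (∑ i, P i ^ 2).coeff (2 * d) = ∑ i, ((P i).coeff d) ^ 2 := by
    rw [Polynomial.finset_sum_coeff]
    refine Finset.sum_congr rfl fun i _ => ?_
    rw [sq, sq, coeff_sq_of_natDegree_le _ _ (hdi i)]
  have hall : ∀ i, (P i).coeff d = 0 := hR m _ (by rw [← hsum, hc0])
  obtain ⟨i₁, -, hi₁⟩ := Finset.exists_mem_eq_sup Finset.univ hne (fun i => (P i).natDegree)
  have hPne : P i₁ ≠ 0 := by
    intro h0
    rw [h0] at hi₁
    simp only [Polynomial.natDegree_zero] at hi₁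
    omega
  have : (P i₁).coeff d ≠ 0 := by
    rw [← hd] at hi₁
    rw [hi₁]
    exact Polynomial.leadingCoeff_ne_zero.mpr hPne
  exact this (hall i₁)

end aux

/-- The Motzkin polynomial `x⁴y² + x²y⁴ − 3x²y² + 1` as an element of `ℝ[x,y]`. -/
noncomputable def motzkin : MvPolynomial (Fin 2) ℝ :=
  X 0 ^ 4 * X 1 ^ 2 + X 0 ^ 2 * X 1 ^ 4 - 3 * (X 0 ^ 2 * X 1 ^ 2) + 1

/-- The Motzkin polynomial is nonnegative on `ℝ²` but is not a sum of squares of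
polynomials. -/
theorem motzkin_nonneg_not_sum_of_squares :
    (∀ x y : ℝ, 0 ≤ MvPolynomial.eval ![x, y] motzkin) ∧
    ¬ ∃ (m : ℕ) (p : Fin m → MvPolynomial (Fin 2) ℝ), motzkin = ∑ i, p i ^ 2 := by
  constructor
  · intro x y
    have he : MvPolynomial.eval ![x, y] motzkin
        = x ^ 4 * y ^ 2 + x ^ 2 * y ^ 4 - 3 * (x ^ 2 * y ^ 2) + 1 := by
      simp [motzkin]
    rw [he]
    nlinarith [sq_nonneg (x ^ 2 * y - y), sq_nonneg (x * y ^ 2 - x), sq_nonneg (x * y),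
      sq_nonneg (x ^ 2 * y ^ 2 - 1), sq_nonneg (x * y * (x * y - 1)), sq_nonneg (x - y),
      sq_nonneg (x + y), sq_nonneg x, sq_nonneg y]
  · rintro ⟨m, p, hp⟩
    classical
    set v : Fin 2 → Polynomial (Polynomial ℝ) := ![Polynomial.X, Polynomial.C Polynomial.X] with hv
    set P : Fin m → Polynomial (Polynomial ℝ) := fun i => MvPolynomial.aeval v (p i) with hPdef
    have hN : MvPolynomial.aeval v motzkin
        = Polynomial.C (Polynomial.X ^ 2) * Polynomial.X ^ 4
          + Polynomial.C (Polynomial.X ^ 4 - 3 * Polynomial.X ^ 2) * Polynomial.X ^ 2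
          + Polynomial.C 1 := by
      simp only [motzkin, map_add, map_sub, map_mul, map_pow, map_one, map_ofNat,
        MvPolynomial.aeval_X, hv, Matrix.cons_val_zero, Matrix.cons_val_one, Matrix.head_cons,
        Polynomial.C_1]
      ring
    have hEq : Polynomial.C ((Polynomial.X : Polynomial ℝ) ^ 2) * Polynomial.X ^ 4
          + Polynomial.C ((Polynomial.X : Polynomial ℝ) ^ 4 - 3 * Polynomial.X ^ 2)
            * Polynomial.X ^ 2
          + Polynomial.C 1 = ∑ i, P i ^ 2 := by
      rw [← hN, hp, map_sum]
      simp [hPdef]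
    have hdegN : (∑ i, P i ^ 2).natDegree ≤ 4 := by
      rw [← hEq]
      compute_degree
    have hdeg : ∀ i, (P i).natDegree ≤ 2 := by
      intro i
      have := sos_natDegree_le (fun _ r h => polyreal_sos_zero r h) P hdegN i
      omega
    set a : Fin m → Polynomial ℝ := fun i => (P i).coeff 0 with ha
    set b : Fin m → Polynomial ℝ := fun i => (P i).coeff 1 with hb
    set c : Fin m → Polynomial ℝ := fun i => (P i).coeff 2 with hc
    have hco : ∀ q : Polynomial (Polynomial ℝ), q.natDegree ≤ 2 →
        (q ^ 2).coeff 0 = q.coeff 0 ^ 2 ∧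
        (q ^ 2).coeff 2 = 2 * (q.coeff 0 * q.coeff 2) + q.coeff 1 ^ 2 ∧
        (q ^ 2).coeff 4 = q.coeff 2 ^ 2 := by
      intro q hq
      refine ⟨by rw [sq, Polynomial.mul_coeff_zero, sq], ?_, ?_⟩
      · rw [sq, Polynomial.coeff_mul, Finset.Nat.sum_antidiagonal_eq_sum_range_succ_mk,
          Finset.sum_range_succ, Finset.sum_range_succ, Finset.sum_range_succ,
          Finset.sum_range_zero]
        norm_num
        ring
      · rw [sq, show (4 : ℕ) = 2 * 2 from rfl, coeff_sq_of_natDegree_le q 2 hq, sq]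
    have hcoeffEq : ∀ k : ℕ,
        (Polynomial.C ((Polynomial.X : Polynomial ℝ) ^ 2) * Polynomial.X ^ 4
          + Polynomial.C ((Polynomial.X : Polynomial ℝ) ^ 4 - 3 * Polynomial.X ^ 2)
            * Polynomial.X ^ 2
          + Polynomial.C 1).coeff k = ∑ i, (P i ^ 2).coeff k := by
      intro k
      rw [hEq, Polynomial.finset_sum_coeff]
    have E0 : ∑ i, a i ^ 2 = (1 : Polynomial ℝ) := by
      have h0 := hcoeffEq 0
      simp only [Polynomial.coeff_add, Polynomial.coeff_C_mul, Polynomial.coeff_X_pow,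
        Polynomial.coeff_C] at h0
      norm_num at h0
      rw [← Finset.sum_congr rfl fun i _ => ((hco (P i) (hdeg i)).1)]
      exact h0.symm
    have E2 : ∑ i, (2 * (a i * c i) + b i ^ 2) = Polynomial.X ^ 4 - 3 * Polynomial.X ^ 2 := by
      have h0 := hcoeffEq 2
      simp only [Polynomial.coeff_add, Polynomial.coeff_C_mul, Polynomial.coeff_X_pow,
        Polynomial.coeff_C] at h0
      norm_num at h0
      rw [← Finset.sum_congr rfl fun i _ => ((hco (P i) (hdeg i)).2.1)]
      exact h0.symm
    have E4 : ∑ i, c i ^ 2 = (Polynomial.X : Polynomial ℝ) ^ 2 := by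
      have h0 := hcoeffEq 4
      simp only [Polynomial.coeff_add, Polynomial.coeff_C_mul, Polynomial.coeff_X_pow,
        Polynomial.coeff_C] at h0
      norm_num at h0
      rw [← Finset.sum_congr rfl fun i _ => ((hco (P i) (hdeg i)).2.2)]
      exact h0.symm
    have hadeg : ∀ i, (a i).natDegree = 0 := by
      intro i
      have h1 : (∑ i, a i ^ 2).natDegree ≤ 0 := by rw [E0]; simp
      have := sos_natDegree_le (fun _ r h => real_sos_zero r h) a h1 i
      omega
    have hcdeg : ∀ i, (c i).natDegree ≤ 1 := by
      intro i
      have h1 : (∑ i, c i ^ 2).natDegree ≤ 2 := by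
        rw [E4]
        compute_degree
      have := sos_natDegree_le (fun _ r h => real_sos_zero r h) c h1 i
      omega
    have hc0 : ∀ i, (c i).coeff 0 = 0 := by
      have h0 := congrArg (Polynomial.eval 0) E4
      simp only [Polynomial.eval_finset_sum, Polynomial.eval_pow, Polynomial.eval_X] at h0
      norm_num at h0
      intro i
      have := real_sos_zero (fun i => (c i).eval 0) h0 i
      rw [Polynomial.coeff_zero_eq_eval_zero]
      exact this
    have hEv : ∀ t : ℝ, ∑ i, (2 * ((a i).eval t * (c i).eval t) + ((b i).eval t) ^ 2)
        = t ^ 4 - 3 * t ^ 2 := by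
      intro t
      have h0 := congrArg (Polynomial.eval t) E2
      simpa [Polynomial.eval_finset_sum] using h0
    have haconst : ∀ i, (a i).eval 1 = (a i).eval (-1) := by
      intro i
      rw [Polynomial.eq_C_of_natDegree_le_zero (le_of_eq (hadeg i))]
      simp
    have hcodd : ∀ i, (c i).eval (-1) = -((c i).eval 1) := by
      intro i
      rw [Polynomial.eq_X_add_C_of_natDegree_le_one (hcdeg i), hc0 i]
      simp
    have h1 := hEv 1
    have h2 := hEv (-1)
    have key : (0 : ℝ) ≤ ∑ i, (2 * ((a i).eval 1 * (c i).eval 1) + ((b i).eval 1) ^ 2)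
        + ∑ i, (2 * ((a i).eval (-1) * (c i).eval (-1)) + ((b i).eval (-1)) ^ 2) := by
      rw [← Finset.sum_add_distrib]
      apply Finset.sum_nonneg
      intro i _
      rw [← haconst i, hcodd i]
      nlinarith [sq_nonneg ((b i).eval 1), sq_nonneg ((b i).eval (-1))]
    rw [h1, h2] at key
    norm_num at key
end
end

section
/- Let P be a polynomial in n real variables and let C_P denote its Newton polytope, i.e., the convex hull in ℝⁿ of the exponent vectors (regarded as points of ℝⁿ) of the monomials of P with nonzero coefficient. Suppose there is a multi-index p such that the coefficient of x^p in P is negative and such that p (as a point of ℝⁿ) cannot be written as a + b with a, b ∈ (1/2)·C_P and a ≠ b. Then P is not a sum of squares of polynomials. -/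
open scoped Pointwise

set_option maxHeartbeats 1000000

noncomputable section

/-- The Newton polytope of a multivariate polynomial: the convex hull in `ℝⁿ` of the
exponent vectors of its monomials with nonzero coefficient. -/
noncomputable def newtonPolytope {n : ℕ} (P : MvPolynomial (Fin n) ℝ) : Set (Fin n → ℝ) :=
  convexHull ℝ ((fun d : Fin n →₀ ℕ => fun i => ((d i : ℕ) : ℝ)) ''
    (P.support : Set (Fin n →₀ ℕ)))

namespace NewtonAux

variable {n : ℕ}

def ι (d : Fin n →₀ ℕ) : Fin n → ℝ := fun i => ((d i : ℕ) : ℝ)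

lemma iota_inj : Function.Injective (ι (n := n)) := by
  intro a b h
  ext j
  exact Nat.cast_injective (congrFun h j)

lemma iota_add (a b : Fin n →₀ ℕ) : ι (a + b) = ι a + ι b := by
  funext j
  simp only [ι, Finsupp.add_apply, Pi.add_apply, Nat.cast_add]

lemma reznick {m : ℕ} (g : Fin m → MvPolynomial (Fin n) ℝ) (i : Fin m)
    (d : Fin n →₀ ℕ) (hd : d ∈ (g i).support) :
    ι d ∈ (2⁻¹ : ℝ) • newtonPolytope (∑ k, g k ^ 2) := by
  classical
  set P : MvPolynomial (Fin n) ℝ := ∑ k, g k ^ 2 with hPdef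
  set S : Set (Fin n → ℝ) := ι '' (⋃ k, ((g k).support : Set (Fin n →₀ ℕ))) with hSdef
  have hSfin : S.Finite :=
    ((Set.finite_iUnion fun k => (g k).support.finite_toSet).image ι)
  set C : Set (Fin n → ℝ) := convexHull ℝ S with hCdef
  have hhalfconv : Convex ℝ ((2⁻¹ : ℝ) • newtonPolytope P) :=
    (convex_convexHull ℝ _).smul _
  -- every extreme point of C lies in the half Newton polytope
  have hext : C.extremePoints ℝ ⊆ (2⁻¹ : ℝ) • newtonPolytope P := by
    intro v hv
    have hvS : v ∈ S := extremePoints_convexHull_subset hv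
    obtain ⟨e, he, rfl⟩ := hvS
    obtain ⟨_, ⟨k, rfl⟩, hek⟩ := he
    -- key: any pair (a,b) with a+b = e+e and both coeffs nonzero must be (e,e)
    have key : ∀ (l : Fin m) (a b : Fin n →₀ ℕ), a ∈ (g l).support → b ∈ (g l).support →
        a + b = e + e → a = e ∧ b = e := by
      intro l a b ha hb hab
      have haC : ι a ∈ C := subset_convexHull ℝ S ⟨a, Set.mem_iUnion.2 ⟨l, ha⟩, rfl⟩
      have hbC : ι b ∈ C := subset_convexHull ℝ S ⟨b, Set.mem_iUnion.2 ⟨l, hb⟩, rfl⟩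
      have hmid : ι e ∈ openSegment ℝ (ι a) (ι b) := by
        refine ⟨2⁻¹, 2⁻¹, by norm_num, by norm_num, by norm_num, ?_⟩
        have : ι a + ι b = ι e + ι e := by rw [← iota_add, ← iota_add, hab]
        rw [← smul_add, this, smul_add, ← add_smul]
        norm_num
      obtain ⟨h1, h2⟩ := (mem_extremePoints.1 hv).2 _ haC _ hbC hmid
      exact ⟨iota_inj h1, iota_inj h2⟩
    have hcoeff : ∀ l : Fin m, MvPolynomial.coeff (e + e) (g l ^ 2) =
        (MvPolynomial.coeff e (g l)) ^ 2 := by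
      intro l
      rw [sq, MvPolynomial.coeff_mul, pow_two]
      rw [Finset.sum_eq_single_of_mem ((e, e) : (Fin n →₀ ℕ) × (Fin n →₀ ℕ))
        (Finset.HasAntidiagonal.mem_antidiagonal.2 rfl)]
      · intro ab hab hne
        by_contra h0
        have ha : ab.1 ∈ (g l).support := by
          simp only [MvPolynomial.mem_support_iff]
          intro h; apply h0; rw [h, zero_mul]
        have hb : ab.2 ∈ (g l).support := by
          simp only [MvPolynomial.mem_support_iff]
          intro h; apply h0; rw [h, mul_zero]
        obtain ⟨h1, h2⟩ := key l ab.1 ab.2 ha hb (Finset.HasAntidiagonal.mem_antidiagonal.1 hab)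
        exact hne (Prod.ext h1 h2)

    have hP2 : MvPolynomial.coeff (e + e) P = ∑ l, (MvPolynomial.coeff e (g l)) ^ 2 := by
      rw [hPdef, MvPolynomial.coeff_sum]
      exact Finset.sum_congr rfl fun l _ => hcoeff l
    have hpos : 0 < MvPolynomial.coeff (e + e) P := by
      rw [hP2]
      refine Finset.sum_pos' (fun l _ => sq_nonneg _) ⟨k, Finset.mem_univ k, ?_⟩
      have hk : MvPolynomial.coeff e (g k) ≠ 0 := by simpa using hek
      have := mul_self_pos.2 hk
      rwa [← pow_two] at this
    have hmem : (e + e) ∈ P.support := MvPolynomial.mem_support_iff.2 hpos.ne'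
    have h2e : ι (e + e) ∈ newtonPolytope P :=
      subset_convexHull ℝ _ ⟨e + e, hmem, rfl⟩
    refine ⟨ι (e + e), h2e, ?_⟩
    show (2⁻¹ : ℝ) • ι (e + e) = ι e
    rw [iota_add, smul_add, ← add_smul]
    norm_num
  -- Krein–Milman for the polytope C
  have hCeq : convexHull ℝ (C.extremePoints ℝ) = C := by
    have h1 : IsClosed (convexHull ℝ (C.extremePoints ℝ)) :=
      (hSfin.subset extremePoints_convexHull_subset).isClosed_convexHull ℝ
    have := closure_convexHull_extremePoints (hSfin.isCompact_convexHull ℝ) (convex_convexHull ℝ S)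
    rwa [h1.closure_eq] at this
  have hCsub : C ⊆ (2⁻¹ : ℝ) • newtonPolytope P := by
    rw [← hCeq]
    exact convexHull_min hext hhalfconv
  exact hCsub (subset_convexHull ℝ S ⟨d, Set.mem_iUnion.2 ⟨i, hd⟩, rfl⟩)

end NewtonAux

/-- If a polynomial `P` has a monomial `x^p` with negative coefficient whose exponent
vector `p` cannot be written as `a + b` with `a ≠ b` both in the half Newton polytope
`(1/2)·C_P`, then `P` is not a sum of squares of polynomials. -/
theorem not_sum_of_squares_of_newton_polytope_criterion
    {n : ℕ} (P : MvPolynomial (Fin n) ℝ)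
    (p : (Fin n) →₀ ℕ) (hneg : MvPolynomial.coeff p P < 0)
    (hnot : ∀ a b : Fin n → ℝ,
      a ∈ (2⁻¹ : ℝ) • newtonPolytope P →
      b ∈ (2⁻¹ : ℝ) • newtonPolytope P →
      a ≠ b → (fun i => ((p i : ℕ) : ℝ)) ≠ a + b) :
    ¬ ∃ (m : ℕ) (g : Fin m → MvPolynomial (Fin n) ℝ), P = ∑ i, g i ^ 2 := by
  rintro ⟨m, g, rfl⟩
  refine absurd hneg (not_lt.2 ?_)
  rw [MvPolynomial.coeff_sum]
  refine Finset.sum_nonneg fun i _ => ?_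
  rw [sq, MvPolynomial.coeff_mul]
  refine Finset.sum_nonneg fun ab hab => ?_
  by_cases h0 : MvPolynomial.coeff ab.1 (g i) * MvPolynomial.coeff ab.2 (g i) = 0
  · rw [h0]
  · have ha : ab.1 ∈ (g i).support := by
      simp only [MvPolynomial.mem_support_iff]
      intro h; apply h0; rw [h, zero_mul]
    have hb : ab.2 ∈ (g i).support := by
      simp only [MvPolynomial.mem_support_iff]
      intro h; apply h0; rw [h, mul_zero]
    have hamem := NewtonAux.reznick g i ab.1 ha
    have hbmem := NewtonAux.reznick g i ab.2 hb
    have heq : ab.1 = ab.2 := by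
      by_contra hne
      have hne' : NewtonAux.ι ab.1 ≠ NewtonAux.ι ab.2 := fun h => hne (NewtonAux.iota_inj h)
      refine hnot _ _ hamem hbmem hne' ?_
      have : ab.1 + ab.2 = p := Finset.HasAntidiagonal.mem_antidiagonal.1 hab
      rw [← NewtonAux.iota_add, this]
      rfl
    rw [heq]
    exact mul_self_nonneg _
end
end

section
/- (Bony's extension lemma) Let Ω be a nonempty open proper subset of ℝⁿ and let p : Ω → ℝ be continuous and strictly positive on Ω. Then there exists a function φ that is infinitely differentiable on Ω, strictly positive on Ω, and whose derivatives of every order decay faster than p at the boundary: for every integer m ≥ 0 and every ε > 0 there exists δ > 0 such that every x ∈ Ω with dist(x, ℝⁿ ∖ Ω) < δ satisfies ‖D^m φ(x)‖ ≤ ε · p(x). -/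
noncomputable section
set_option maxHeartbeats 1000000

open Metric Set Function

/-- (Bony's extension lemma) If `Ω` is a nonempty open proper subset of `ℝⁿ` and
`p : Ω → ℝ` is continuous and strictly positive on `Ω`, then there is a smooth, strictly
positive function `φ` on `Ω` all of whose derivatives decay faster than `p` at the
boundary of `Ω`. -/
theorem bony_extension_lemma (n : ℕ)
    (Ω : Set (EuclideanSpace ℝ (Fin n))) (hΩo : IsOpen Ω)
    (hΩne : Ω.Nonempty) (hΩproper : Ω ≠ Set.univ)
    (p : EuclideanSpace ℝ (Fin n) → ℝ)
    (hpc : ContinuousOn p Ω) (hppos : ∀ x ∈ Ω, 0 < p x) :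
    ∃ φ : EuclideanSpace ℝ (Fin n) → ℝ,
      ContDiffOn ℝ (⊤ : ℕ∞) φ Ω ∧
      (∀ x ∈ Ω, 0 < φ x) ∧
      ∀ (m : ℕ) (ε : ℝ), 0 < ε → ∃ δ : ℝ, 0 < δ ∧
        ∀ x ∈ Ω, Metric.infDist x Ωᶜ < δ →
          ‖iteratedFDerivWithin ℝ m φ Ω x‖ ≤ ε * p x := by
  classical
  have hΩcc : IsClosed Ωᶜ := hΩo.isClosed_compl
  have hΩcne : Ωᶜ.Nonempty := Set.nonempty_compl.2 hΩproper
  set d : EuclideanSpace ℝ (Fin n) → ℝ := fun x => Metric.infDist x Ωᶜ with hd_def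
  have hd_cont : Continuous d := Metric.continuous_infDist_pt _
  have hd_pos : ∀ x ∈ Ω, 0 < d x := fun x hx =>
    (hΩcc.notMem_iff_infDist_pos hΩcne).1 (by simpa using hx)
  have hd_mem : ∀ x, 0 < d x → x ∈ Ω := by
    intro x hx
    by_contra h
    have : d x = 0 := Metric.infDist_zero_of_mem h
    linarith
  have hd_lip : ∀ x y : EuclideanSpace ℝ (Fin n), d x ≤ d y + dist x y := fun x y =>
    Metric.infDist_le_infDist_add_dist
  -- radii
  set ρ : ℕ → ℝ := fun k => (1/2)^k/8 with hρ_def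
  have hρ : ∀ k, 0 < ρ k := fun k => by positivity
  have hρ1 : ∀ k, ρ k ≤ 1/8 := by
    intro k
    have h1 : (1/2:ℝ)^k ≤ 1 := pow_le_one₀ (by norm_num) (by norm_num)
    simp only [hρ_def]
    linarith
  -- compact pieces and shells
  set C : ℕ → Set (EuclideanSpace ℝ (Fin n)) :=
    fun k => {x | (1/2)^k ≤ d x} ∩ Metric.closedBall 0 (2^k) with hC_def
  set U : ℕ → Set (EuclideanSpace ℝ (Fin n)) :=
    fun k => {x | (1/2)^k < d x} ∩ Metric.ball 0 (2^k) with hU_def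
  have hCcl : ∀ k, IsClosed (C k) := fun k =>
    (isClosed_le continuous_const hd_cont).inter Metric.isClosed_closedBall
  have hCcpt : ∀ k, IsCompact (C k) :=
    fun k => (isCompact_closedBall _ _).inter_left (isClosed_le continuous_const hd_cont)
  have hUo : ∀ k, IsOpen (U k) := fun k =>
    (isOpen_lt continuous_const hd_cont).inter Metric.isOpen_ball
  have hUC : ∀ k, U k ⊆ C k := by
    intro k x hx
    obtain ⟨h1, h2⟩ := hx
    rw [Set.mem_setOf_eq] at h1
    exact ⟨le_of_lt h1, Metric.ball_subset_closedBall h2⟩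
  set S : ℕ → Set (EuclideanSpace ℝ (Fin n)) :=
    fun k => C k \ ⋃ (j : ℕ) (_ : j < k), U j with hS_def
  have hSc : ∀ k, IsCompact (S k) := fun k =>
    (hCcpt k).diff (isOpen_biUnion fun j _ => hUo j)
  -- the shells cover Ω
  have hΩS : ∀ x ∈ Ω, ∃ k, x ∈ S k := by
    intro x hx
    have hex : ∃ k, x ∈ C k := by
      obtain ⟨k1, hk1⟩ := exists_pow_lt_of_lt_one (hd_pos x hx) (by norm_num : (1/2:ℝ) < 1)
      obtain ⟨k2, hk2⟩ := pow_unbounded_of_one_lt (‖x‖) (by norm_num : (1:ℝ) < 2)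
      refine ⟨max k1 k2, ⟨?_, ?_⟩⟩
      · calc (1/2:ℝ)^(max k1 k2) ≤ (1/2)^k1 :=
              pow_le_pow_of_le_one (by norm_num) (by norm_num) (le_max_left _ _)
          _ ≤ d x := hk1.le
      · rw [Metric.mem_closedBall, dist_zero_right]
        calc ‖x‖ ≤ 2^k2 := hk2.le
          _ ≤ 2^(max k1 k2) := pow_le_pow_right₀ (by norm_num) (le_max_right _ _)
    refine ⟨Nat.find hex, Nat.find_spec hex, ?_⟩
    rw [Set.mem_iUnion₂]
    rintro ⟨j, hj, hxj⟩
    exact Nat.find_min hex hj (hUC j hxj)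
  -- finite subcovers of the shells
  have hsub : ∀ k, ∃ t : Finset (EuclideanSpace ℝ (Fin n)),
      (∀ y ∈ t, y ∈ S k) ∧ S k ⊆ ⋃ y ∈ t, Metric.ball y (ρ k) :=
    fun k => (hSc k).elim_nhds_subcover (fun y => Metric.ball y (ρ k))
      (fun y _ => Metric.ball_mem_nhds _ (hρ k))
  choose T hT1 hT2 using hsub
  -- the countable index type
  obtain ⟨e, he⟩ := Countable.exists_injective_nat (Σ k : ℕ, {y // y ∈ T k})
  -- basic per-bump facts
  have hctrS : ∀ a : Σ k : ℕ, {y // y ∈ T k}, (a.2.1 : EuclideanSpace ℝ (Fin n)) ∈ S a.1 :=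
    fun a => hT1 a.1 a.2.1 a.2.2
  have hdctr : ∀ a : Σ k : ℕ, {y // y ∈ T k}, 8 * ρ a.1 ≤ d a.2.1 := by
    intro a
    have h1 : (1/2:ℝ)^a.1 ≤ d a.2.1 := (hctrS a).1.1
    simp only [hρ_def]
    linarith
  have hdctr_pos : ∀ a : Σ k : ℕ, {y // y ∈ T k}, 0 < d a.2.1 := fun a =>
    lt_of_lt_of_le (by positivity) (hdctr a)
  -- the bumps
  set bump : ∀ a : Σ k : ℕ, {y // y ∈ T k}, ContDiffBump (a.2.1 : EuclideanSpace ℝ (Fin n)) :=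
    fun a => ⟨ρ a.1 / 2, ρ a.1, by positivity, by have := hρ a.1; linarith⟩ with hbump_def
  have hbump_tsupp : ∀ a, tsupport (⇑(bump a)) = Metric.closedBall a.2.1 (ρ a.1) := fun a =>
    (bump a).tsupport_eq
  have hd_supp : ∀ (a : Σ k : ℕ, {y // y ∈ T k}) z,
      z ∈ Metric.closedBall a.2.1 (ρ a.1) → 7 * ρ a.1 ≤ d z := by
    intro a z hz
    have h8 := hdctr a
    have hlip := hd_lip a.2.1 z
    have hdist : dist a.2.1 z ≤ ρ a.1 := by rw [dist_comm]; exact hz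
    linarith
  have hsupp_mem : ∀ (a : Σ k : ℕ, {y // y ∈ T k}) z,
      z ∈ Metric.closedBall a.2.1 (ρ a.1) → z ∈ Ω := fun a z hz =>
    hd_mem z (lt_of_lt_of_le (by have := hρ a.1; linarith) (hd_supp a z hz))
  have hd_upper : ∀ (a : Σ k : ℕ, {y // y ∈ T k}) z,
      z ∈ Metric.closedBall a.2.1 (ρ a.1) → d a.2.1 ≤ 2 * d z := by
    intro a z hz
    have h8 := hdctr a
    have hlip := hd_lip a.2.1 z
    have hdist : dist a.2.1 z ≤ ρ a.1 := by rw [dist_comm]; exact hz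
    have hρa := hρ a.1
    linarith
  -- minimum of p on each bump support
  have hpmin : ∀ a : Σ k : ℕ, {y // y ∈ T k}, ∃ v : ℝ, 0 < v ∧
      ∀ z ∈ Metric.closedBall a.2.1 (ρ a.1), v ≤ p z := by
    intro a
    obtain ⟨z0, hz0, hmin⟩ := (isCompact_closedBall _ _).exists_isMinOn
      ⟨a.2.1, Metric.mem_closedBall_self (hρ a.1).le⟩
      (hpc.mono (fun z hz => hsupp_mem a z hz))
    exact ⟨p z0, hppos z0 (hsupp_mem a z0 hz0), fun z hz => hmin hz⟩
  choose pm hpm_pos hpm_le using hpmin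
  -- sup-norm bounds of the derivatives of the bumps
  have hMex : ∀ (a : Σ k : ℕ, {y // y ∈ T k}) (m : ℕ), ∃ Cb : ℝ, 0 ≤ Cb ∧
      ∀ x, ‖iteratedFDeriv ℝ m (⇑(bump a)) x‖ ≤ Cb := by
    intro a m
    have hcd : ContDiff ℝ (⊤ : ℕ∞) ⇑(bump a) := (bump a).contDiff
    have h1 : HasCompactSupport (iteratedFDeriv ℝ m (⇑(bump a))) :=
      (bump a).hasCompactSupport.iteratedFDeriv m
    obtain ⟨Cb, hCb⟩ := h1.exists_bound_of_continuous (hcd.continuous_iteratedFDeriv (by exact_mod_cast le_top))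
    exact ⟨Cb, le_trans (norm_nonneg _) (hCb 0), hCb⟩
  choose M hM0 hM using hMex
  -- the coefficients
  set Den : (Σ k : ℕ, {y // y ∈ T k}) → ℝ :=
    fun a => 1 + ∑ j ∈ Finset.range (e a + 1), M a j with hDen_def
  have hDen1 : ∀ a, 1 ≤ Den a := fun a =>
    le_add_of_nonneg_right (Finset.sum_nonneg fun j _ => hM0 a j)
  have hDen0 : ∀ a, 0 < Den a := fun a => lt_of_lt_of_le one_pos (hDen1 a)
  set c : (Σ k : ℕ, {y // y ∈ T k}) → ℝ :=
    fun a => (1/2)^(e a + 1) * pm a * d a.2.1 / Den a with hc_def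
  have hc_pos : ∀ a, 0 < c a := by
    intro a
    apply div_pos _ (hDen0 a)
    have := hpm_pos a
    have := hdctr_pos a
    positivity
  set g : (Σ k : ℕ, {y // y ∈ T k}) → EuclideanSpace ℝ (Fin n) → ℝ :=
    fun a => fun y => c a • (bump a) y with hg_def
  set φ : EuclideanSpace ℝ (Fin n) → ℝ := fun x => ∑ᶠ a, g a x with hφ_def
  -- local finiteness
  have key : ∀ x ∈ Ω, ∃ r > (0:ℝ),
      { a : Σ k : ℕ, {y // y ∈ T k} |
        (Metric.closedBall a.2.1 (ρ a.1) ∩ Metric.ball x r).Nonempty }.Finite := by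
    intro x hx
    have ht : 0 < d x := hd_pos x hx
    obtain ⟨K1, hK1⟩ := exists_pow_lt_of_lt_one (half_pos ht) (by norm_num : (1/2:ℝ) < 1)
    obtain ⟨K2, hK2⟩ := pow_unbounded_of_one_lt (‖x‖ + 2) (by norm_num : (1:ℝ) < 2)
    set K := max K1 K2 with hK_def
    have hKa : (1/2:ℝ)^K < d x / 2 :=
      lt_of_le_of_lt (pow_le_pow_of_le_one (by norm_num) (by norm_num) (le_max_left _ _)) hK1
    have hKb : ‖x‖ + 2 < 2^K :=
      lt_of_lt_of_le hK2 (pow_le_pow_right₀ (by norm_num) (le_max_right _ _))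
    refine ⟨min (d x / 4) 1, by positivity, ?_⟩
    have hfin1 : ∀ k, ({ a : Σ k : ℕ, {y // y ∈ T k} | a.1 = k }).Finite := by
      intro k
      apply (Set.finite_range (fun y : {y // y ∈ T k} => (⟨k, y⟩ : Σ k : ℕ, {y // y ∈ T k}))).subset
      rintro ⟨k', y⟩ h
      simp only [Set.mem_setOf_eq] at h
      subst h
      exact ⟨y, rfl⟩
    have hfinK : ({ a : Σ k : ℕ, {y // y ∈ T k} | a.1 ≤ K }).Finite := by
      have : { a : Σ k : ℕ, {y // y ∈ T k} | a.1 ≤ K }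
          ⊆ ⋃ k ∈ Set.Iic K, { a : Σ k : ℕ, {y // y ∈ T k} | a.1 = k } := by
        intro a ha
        exact Set.mem_biUnion ha rfl
      exact ((Set.finite_Iic K).biUnion fun k _ => hfin1 k).subset this
    apply hfinK.subset
    rintro ⟨k, y⟩ ⟨z, hz1, hz2⟩
    simp only [Set.mem_setOf_eq]
    by_contra hk
    push_neg at hk
    have hyS : (y.1 : EuclideanSpace ℝ (Fin n)) ∈ S k := hT1 k y.1 y.2
    have hynUK : ¬ ((1/2:ℝ)^K < d y.1 ∧ ‖(y.1 : EuclideanSpace ℝ (Fin n))‖ < 2^K) := by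
      intro hc
      apply hyS.2
      rw [Set.mem_iUnion₂]
      refine ⟨K, hk, hc.1, ?_⟩
      rw [Metric.mem_ball, dist_zero_right]
      exact hc.2
    have hdyz : dist (y.1 : EuclideanSpace ℝ (Fin n)) z ≤ ρ k := by rw [dist_comm]; exact hz1
    have hzx : dist z x < min (d x/4) 1 := hz2
    have hyx : dist (y.1 : EuclideanSpace ℝ (Fin n)) x < ρ k + min (d x/4) 1 :=
      lt_of_le_of_lt (dist_triangle _ z x) (by linarith)
    have h8 : 8 * ρ k ≤ d y.1 := by
      have h1 : (1/2:ℝ)^k ≤ d y.1 := hyS.1.1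
      simp only [hρ_def]
      linarith
    rcases not_and_or.1 hynUK with h1 | h2
    · push_neg at h1
      have hlipx : d x ≤ d y.1 + dist x y.1 := hd_lip x y.1
      have hxy' : dist x (y.1 : EuclideanSpace ℝ (Fin n)) < ρ k + min (d x/4) 1 := by
        rw [dist_comm]; exact hyx
      have hmin1 : min (d x/4) 1 ≤ d x/4 := min_le_left _ _
      have hρpos := hρ k
      linarith
    · push_neg at h2
      have hymix : ‖(y.1 : EuclideanSpace ℝ (Fin n))‖ ≤ ‖x‖ + dist (y.1 : EuclideanSpace ℝ (Fin n)) x := by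
        rw [dist_eq_norm]
        have := norm_sub_norm_le (y.1 : EuclideanSpace ℝ (Fin n)) x
        linarith
      have hmin2 : min (d x/4) 1 ≤ 1 := min_le_right _ _
      have := hρ1 k
      linarith
  -- local representation as a finite sum
  have rep : ∀ x ∈ Ω, ∃ (r : ℝ) (F : Finset (Σ k : ℕ, {y // y ∈ T k})), 0 < r ∧
      (∀ y ∈ Metric.ball x r, ∀ a, g a y ≠ 0 → a ∈ F) ∧
      (∀ y ∈ Metric.ball x r, φ y = ∑ a ∈ F, g a y) := by
    intro x hx
    obtain ⟨r, hr, hfin⟩ := key x hx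
    have hmem : ∀ y ∈ Metric.ball x r, ∀ a, g a y ≠ 0 → a ∈ hfin.toFinset := by
      intro y hy a ha
      have hb : (bump a) y ≠ 0 := by
        intro h
        apply ha
        simp only [hg_def, h, smul_eq_mul, mul_zero]
      have hy1 : y ∈ Metric.ball a.2.1 (ρ a.1) := by
        rw [← (bump a).support_eq]
        exact hb
      rw [Set.Finite.mem_toFinset]
      exact ⟨y, Metric.ball_subset_closedBall hy1, hy⟩
    refine ⟨r, hfin.toFinset, hr, hmem, ?_⟩
    intro y hy
    apply finsum_eq_finset_sum_of_support_subset
    intro a ha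
    exact hmem y hy a ha
  -- smoothness
  have hφ_smooth : ContDiffOn ℝ (⊤ : ℕ∞) φ Ω := by
    intro x hx
    obtain ⟨r, F, hr, _, hrep⟩ := rep x hx
    have hsum : ContDiff ℝ (⊤ : ℕ∞) (fun y => ∑ a ∈ F, g a y) :=
      ContDiff.sum fun a _ => ((bump a).contDiff).const_smul (c a)
    have : ContDiffAt ℝ (⊤ : ℕ∞) φ x := by
      apply hsum.contDiffAt.congr_of_eventuallyEq
      filter_upwards [Metric.ball_mem_nhds x hr] with y hy using hrep y hy
    exact this.contDiffWithinAt
  -- positivity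
  have hφ_pos : ∀ x ∈ Ω, 0 < φ x := by
    intro x hx
    obtain ⟨r, F, hr, hFmem, hrep⟩ := rep x hx
    rw [hrep x (Metric.mem_ball_self hr)]
    obtain ⟨k, hkS⟩ := hΩS x hx
    have hcov := hT2 k hkS
    rw [Set.mem_iUnion₂] at hcov
    obtain ⟨y, hyT, hxy⟩ := hcov
    set a0 : Σ k : ℕ, {y // y ∈ T k} := ⟨k, ⟨y, hyT⟩⟩ with ha0_def
    have hb0 : 0 < (bump a0) x := (bump a0).pos_of_mem_ball hxy
    have hga0 : 0 < g a0 x := by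
      simp only [hg_def, smul_eq_mul]
      exact mul_pos (hc_pos a0) hb0
    have ha0F : a0 ∈ F := hFmem x (Metric.mem_ball_self hr) a0 (ne_of_gt hga0)
    apply Finset.sum_pos' _ ⟨a0, ha0F, hga0⟩
    intro a _
    simp only [hg_def, smul_eq_mul]
    exact mul_nonneg (hc_pos a).le (bump a).nonneg
  refine ⟨φ, hφ_smooth, hφ_pos, ?_⟩
  intro m ε hε
  have hSfin : ({ a : Σ k : ℕ, {y // y ∈ T k} | e a < m }).Finite :=
    (Set.finite_Iio m).preimage (he.injOn)
  set Fm := hSfin.toFinset with hFm_def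
  set δ2 : ℝ := (insert (1:ℝ) (Fm.image fun a => 7 * ρ a.1)).min'
    (Finset.insert_nonempty _ _) with hδ2_def
  have hδ2_pos : 0 < δ2 := by
    have hmem := Finset.min'_mem (insert (1:ℝ) (Fm.image fun a => 7 * ρ a.1))
      (Finset.insert_nonempty _ _)
    rw [← hδ2_def] at hmem
    rcases Finset.mem_insert.1 hmem with h | h
    · rw [h]; norm_num
    · obtain ⟨a, _, hval⟩ := Finset.mem_image.1 h
      rw [← hval]
      have := hρ a.1
      linarith
  have hδ2_le : ∀ a : Σ k : ℕ, {y // y ∈ T k}, e a < m → δ2 ≤ 7 * ρ a.1 := by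
    intro a ha
    apply Finset.min'_le
    exact Finset.mem_insert_of_mem (Finset.mem_image_of_mem _ (hSfin.mem_toFinset.2 ha))
  refine ⟨min (ε/2) δ2, lt_min (half_pos hε) hδ2_pos, ?_⟩
  intro x hx hdx
  have hdx' : d x < min (ε/2) δ2 := hdx
  rw [iteratedFDerivWithin_of_isOpen m hΩo hx]
  obtain ⟨r, F, hr, hFmem, hrep⟩ := rep x hx
  have hev : φ =ᶠ[nhds x] (fun y => ∑ a ∈ F, g a y) := by
    filter_upwards [Metric.ball_mem_nhds x hr] with y hy using hrep y hy
  have heq : iteratedFDeriv ℝ m φ x = iteratedFDeriv ℝ m (fun y => ∑ a ∈ F, g a y) x := by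
    rw [← iteratedFDerivWithin_univ, ← iteratedFDerivWithin_univ]
    exact Filter.EventuallyEq.iteratedFDerivWithin_eq
      (hev.filter_mono nhdsWithin_le_nhds) hev.eq_of_nhds m
  rw [heq]
  have hsmooth : ∀ a ∈ F, ContDiff ℝ ((m : ℕ∞)) (g a) := fun a _ =>
    ((bump a).contDiff).const_smul (c a)
  rw [iteratedFDeriv_sum hsmooth, Finset.sum_apply]
  have hpx := hppos x hx
  have hbound : ∀ a ∈ F, ‖iteratedFDeriv ℝ m (g a) x‖ ≤ ε * p x * (1/2)^(e a + 1) := by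
    intro a _
    have hgm : iteratedFDeriv ℝ m (g a) x = c a • iteratedFDeriv ℝ m (⇑(bump a)) x :=
      iteratedFDeriv_const_smul_apply' ((bump a).contDiff.contDiffAt)
    rw [hgm, norm_smul, Real.norm_eq_abs, abs_of_pos (hc_pos a)]
    by_cases hxs : x ∈ tsupport (⇑(bump a))
    · have hxball : x ∈ Metric.closedBall a.2.1 (ρ a.1) := by
        rwa [hbump_tsupp a] at hxs
      have hem : m ≤ e a := by
        by_contra hlt
        push_neg at hlt
        have h7 : 7 * ρ a.1 ≤ d x := hd_supp a x hxball
        have h2 := hδ2_le a hlt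
        have h3 : min (ε/2) δ2 ≤ δ2 := min_le_right _ _
        linarith
      have hMle : ‖iteratedFDeriv ℝ m (⇑(bump a)) x‖ ≤ Den a := by
        calc ‖iteratedFDeriv ℝ m (⇑(bump a)) x‖ ≤ M a m := hM a m x
          _ ≤ ∑ j ∈ Finset.range (e a + 1), M a j :=
              Finset.single_le_sum (fun j _ => hM0 a j) (Finset.mem_range.2 (Nat.lt_succ_of_le hem))
          _ ≤ Den a := by simp only [hDen_def]; linarith
      have hca : c a * ‖iteratedFDeriv ℝ m (⇑(bump a)) x‖ ≤ (1/2)^(e a + 1) * pm a * d a.2.1 := by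
        rw [hc_def]
        rw [div_mul_eq_mul_div, div_le_iff₀ (hDen0 a)]
        have hnum : (0:ℝ) ≤ (1/2)^(e a + 1) * pm a * d a.2.1 := by
          have := hpm_pos a
          have := hdctr_pos a
          positivity
        calc (1/2)^(e a + 1) * pm a * d a.2.1 * ‖iteratedFDeriv ℝ m (⇑(bump a)) x‖
            ≤ (1/2)^(e a + 1) * pm a * d a.2.1 * Den a := by
              exact mul_le_mul_of_nonneg_left hMle hnum
          _ = (1/2)^(e a + 1) * pm a * d a.2.1 * Den a := rfl
      have hp : pm a ≤ p x := hpm_le a x hxball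
      have hdc : d a.2.1 ≤ 2 * d x := hd_upper a x hxball
      have hdc2 : d a.2.1 ≤ ε := by
        have h1 : min (ε/2) δ2 ≤ ε/2 := min_le_left _ _
        linarith
      calc c a * ‖iteratedFDeriv ℝ m (⇑(bump a)) x‖
          ≤ (1/2)^(e a + 1) * pm a * d a.2.1 := hca
        _ ≤ (1/2)^(e a + 1) * (p x * ε) := by
            rw [mul_assoc]
            apply mul_le_mul_of_nonneg_left _ (by positivity)
            exact mul_le_mul hp hdc2 (hdctr_pos a).le hpx.le
        _ = ε * p x * (1/2)^(e a + 1) := by ring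
    · have hzero : iteratedFDeriv ℝ m (⇑(bump a)) x = 0 := by
        by_contra h
        exact hxs (support_iteratedFDeriv_subset m h)
      rw [hzero, norm_zero, mul_zero]
      positivity
  have hsum1 : ∑ a ∈ F, ((1:ℝ)/2)^(e a + 1) ≤ 1 := by
    have hinj : ∀ a ∈ F, ∀ b ∈ F, e a = e b → a = b := fun a _ b _ h => he h
    have himg : ∑ a ∈ F, ((1:ℝ)/2)^(e a + 1) = ∑ k ∈ F.image e, ((1:ℝ)/2)^(k+1) :=
      (Finset.sum_image (f := fun k => ((1:ℝ)/2)^(k+1)) (g := e) hinj).symm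
    rw [himg]
    set N := (F.image e).sup id + 1 with hN_def
    calc ∑ k ∈ F.image e, ((1:ℝ)/2)^(k+1)
        ≤ ∑ k ∈ Finset.range N, ((1:ℝ)/2)^(k+1) := by
          apply Finset.sum_le_sum_of_subset_of_nonneg
          · intro k hk
            exact Finset.mem_range.2 (Nat.lt_succ_of_le (Finset.le_sup (f := id) hk))
          · intro k _ _
            positivity
      _ ≤ 1 := by
          have h2 := sum_geometric_two_le N
          have heq2 : ∑ k ∈ Finset.range N, ((1:ℝ)/2)^(k+1)
              = (1/2) * ∑ k ∈ Finset.range N, ((1:ℝ)/2)^k := by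
            rw [Finset.mul_sum]
            apply Finset.sum_congr rfl
            intro k _
            ring
          rw [heq2]
          linarith
  calc ‖∑ a ∈ F, iteratedFDeriv ℝ m (g a) x‖
      ≤ ∑ a ∈ F, ‖iteratedFDeriv ℝ m (g a) x‖ := norm_sum_le _ _
    _ ≤ ∑ a ∈ F, ε * p x * (1/2)^(e a + 1) := Finset.sum_le_sum hbound
    _ = ε * p x * ∑ a ∈ F, ((1:ℝ)/2)^(e a + 1) := by rw [Finset.mul_sum]
    _ ≤ ε * p x * 1 := mul_le_mul_of_nonneg_left hsum1 (by positivity)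
    _ = ε * p x := mul_one _
end
end
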